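/- The agreement function of the t-resilient adversary: let Π be a finite set of n processes and let 0 ≤ t ≤ n−1. For the adversary A_t = {S ⊆ Π : |S| ≥ n−t}, one has setcon(A_t|_P) = max(0, |P| − n + t + 1) for every P ⊆ Π. -/

import Mathlib

variable {α : Type*} [DecidableEq α]

/-- The restriction `A|_P` of an adversary `A` to a set of processes `P`:
the live sets of `A` that are contained in `P`. -/
def restrict (A : Finset (Finset α)) (P : Finset α) : Finset (Finset α) :=
  A.filter fun S => S ⊆ P

/-- The set consensus power `setcon A` of an adversary `A`:
`setcon ∅ = 0` and, for `A ≠ ∅`,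
`setcon A = 1 + max_{S ∈ A} min_{a ∈ S} setcon (A|_{S \ {a}})`. -/
def setcon (A : Finset (Finset α)) : ℕ :=
  if A = ∅ then 0
  else 1 + A.attach.sup fun S =>
    (S.1.attach.image fun a => setcon (restrict A (S.1.erase a.1))).min.untopD 0
termination_by A.card
decreasing_by
  apply Finset.card_lt_card
  rw [Finset.ssubset_def]
  refine ⟨Finset.filter_subset _ _, fun hsub => ?_⟩
  have hmem := hsub S.2
  rw [restrict, Finset.mem_filter] at hmem
  exact Finset.notMem_erase a.1 S.1 (hmem.2 a.2)

/-- The restriction `A|_{P,Q}`: live sets of `A` contained in `P` that intersect `Q`. -/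
def restrictTo (A : Finset (Finset α)) (P Q : Finset α) : Finset (Finset α) :=
  (restrict A P).filter fun S => (S ∩ Q).Nonempty

/-- An adversary is fair if for all `P` and all `Q ⊆ P`,
`setcon (A|_{P,Q}) = min |Q| (setcon (A|_P))`. -/
def Fair (A : Finset (Finset α)) : Prop :=
  ∀ P Q : Finset α, Q ⊆ P →
    setcon (restrictTo A P Q) = min Q.card (setcon (restrict A P))

/-- `csize A`: the minimal cardinality of a hitting set of `A`, i.e. of a set
intersecting every live set of `A`. -/
noncomputable def csize (A : Finset (Finset α)) : ℕ :=
  sInf {k | ∃ H : Finset α, H.card = k ∧ ∀ S ∈ A, (H ∩ S).Nonempty}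

lemma mem_restrict {A : Finset (Finset α)} {P S : Finset α} :
    S ∈ restrict A P ↔ S ∈ A ∧ S ⊆ P := Finset.mem_filter

lemma restrict_restrict (A : Finset (Finset α)) {P Q : Finset α} (h : Q ⊆ P) :
    restrict (restrict A P) Q = restrict A Q := by
  ext S
  simp only [mem_restrict]
  tauto

lemma key [Fintype α] (m : ℕ) (hm : 1 ≤ m) (P : Finset α) :
    setcon (restrict (Finset.univ.filter fun S : Finset α => m ≤ S.card) P)
      = P.card + 1 - m := by
  induction P using Finset.strongInduction with
  | _ P IH =>
    set A : Finset (Finset α) := Finset.univ.filter fun S : Finset α => m ≤ S.card with hA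
    by_cases hP : P.card < m
    · have hempty : restrict A P = ∅ := by
        rw [Finset.eq_empty_iff_forall_notMem]
        intro S hS
        rw [mem_restrict, hA, Finset.mem_filter] at hS
        have := Finset.card_le_card hS.2
        omega
      rw [hempty, setcon]
      simp
      omega
    · push_neg at hP
      have hPmem : P ∈ restrict A P := by
        rw [mem_restrict, hA, Finset.mem_filter]
        exact ⟨⟨Finset.mem_univ _, hP⟩, le_refl _⟩
      have hne : restrict A P ≠ ∅ := Finset.ne_empty_of_mem hPmem
      rw [setcon, if_neg hne]
      have hval : ∀ S : {x // x ∈ restrict A P},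
          ((S.1.attach.image fun a =>
            setcon (restrict (restrict A P) (S.1.erase a.1))).min.untopD 0)
          = S.1.card - m := by
        intro S
        obtain ⟨hSA, hSP⟩ := mem_restrict.mp S.2
        have hScard : m ≤ S.1.card := (Finset.mem_filter.mp hSA).2
        have hSimg : (S.1.attach.image fun a =>
            setcon (restrict (restrict A P) (S.1.erase a.1))) = {S.1.card - m} := by
          have hne' : S.1.Nonempty := Finset.card_pos.mp (by omega)
          apply Finset.eq_singleton_iff_nonempty_unique_mem.mpr
          constructor
          · exact (Finset.Nonempty.image (hne'.attach) _)
          · intro x hx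
            rw [Finset.mem_image] at hx
            obtain ⟨a, _, rfl⟩ := hx
            have herase : S.1.erase a.1 ⊆ P := (Finset.erase_subset _ _).trans hSP
            rw [restrict_restrict A herase]
            have hss : S.1.erase a.1 ⊂ P :=
              (Finset.ssubset_iff_of_subset herase).mpr
                ⟨a.1, hSP a.2, Finset.notMem_erase _ _⟩
            rw [IH _ hss]
            rw [Finset.card_erase_of_mem a.2]
            omega
        simp only [hSimg, Finset.min_singleton]
        rfl
      have hsup : ((restrict A P).attach.sup fun S =>
          (S.1.attach.image fun a =>
            setcon (restrict (restrict A P) (S.1.erase a.1))).min.untopD 0)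
          = P.card - m := by
        apply le_antisymm
        · apply Finset.sup_le
          intro S _
          rw [hval S]
          have := Finset.card_le_card (mem_restrict.mp S.2).2
          omega
        · have := Finset.le_sup (f := fun S : {x // x ∈ restrict A P} =>
            (S.1.attach.image fun a =>
              setcon (restrict (restrict A P) (S.1.erase a.1))).min.untopD 0)
            (Finset.mem_attach _ ⟨P, hPmem⟩)
          simpa [hval ⟨P, hPmem⟩] using this
      rw [hsup]
      omega

/-- the agreement function of the `t`-resilient adversary
(all subsets of size ≥ `n - t`, with `0 ≤ t ≤ n - 1`) is
`P ↦ max 0 (|P| - n + t + 1)`, expressed with truncated subtraction. -/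
theorem setcon_tResilient [Fintype α] (t : ℕ) (ht : t < Fintype.card α) (P : Finset α) :
    setcon (restrict
        (Finset.univ.filter fun S : Finset α => Fintype.card α - t ≤ S.card) P) =
      P.card + t + 1 - Fintype.card α := by
  have h := key (Fintype.card α - t) (by omega) P
  rw [h]
  omega
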